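/- arXiv:2403.00203 — 2 statements merged into one kernel-verified Lean document; each statement's English description precedes it below -/
import Mathlib

section
/- Let n ≥ 3 be odd and let a_1, …, a_n be pairwise coprime odd positive integers. Then there exist integers b_1, …, b_n, all of which are odd, satisfying Σ_{i=1}^{n} b_i · ∏_{j≠i} a_j = 1, with b_i > 0 for all i ≥ 2 and b_1 < 0. -/
/-- For `n ≥ 3` odd and pairwise coprime odd positive integers `a₁, …, aₙ`, there exist
odd integers `b₁, …, bₙ` with `Σᵢ bᵢ · ∏_{j≠i} aⱼ = 1`, `bᵢ > 0` for `i ≥ 2` and `b₁ < 0`. -/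
theorem exists_odd_seifert_coefficients (n : ℕ) (hn : 3 ≤ n) (hodd_n : Odd n)
    (a : Fin n → ℤ) (hpos : ∀ i, 0 < a i) (hodd : ∀ i, Odd (a i))
    (hcop : ∀ i j, i ≠ j → IsCoprime (a i) (a j)) :
    ∃ b : Fin n → ℤ, (∀ i, Odd (b i)) ∧
      (∑ i, b i * ∏ j ∈ Finset.univ.erase i, a j) = 1 ∧
      (∀ i, i ≠ (⟨0, by omega⟩ : Fin n) → 0 < b i) ∧
      b (⟨0, by omega⟩ : Fin n) < 0 := by
  set i0 : Fin n := ⟨0, by omega⟩ with hi0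
  set P : Fin n → ℤ := fun i => ∏ j ∈ Finset.univ.erase i, a j with hP
  have hPpos : ∀ i, 0 < P i := fun i => Finset.prod_pos (fun j _ => hpos j)
  have hPodd : ∀ i, Odd (P i) := fun i =>
    Finset.prod_induction a Odd (fun _ _ => Odd.mul) odd_one (fun j _ => hodd j)
  have hcopP : ∀ i, IsCoprime (a i) (P i) := fun i =>
    IsCoprime.prod_right fun j hj => hcop i j (Finset.mem_erase.1 hj).1.symm
  have hex : ∀ i, ∃ u v : ℤ, u * a i + v * P i = 1 := fun i => hcopP i
  choose u v huv using hex
  -- adjust coefficients for i ≠ 0 to be odd and positive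
  set k : Fin n → ℤ := fun i => 2 * |v i| + 2 + (if Even (v i) then 1 else 0) with hk
  set c : Fin n → ℤ := fun i => v i + k i * a i with hc
  have hkge : ∀ i, 2 * |v i| + 2 ≤ k i := by
    intro i; simp only [hk]; split <;> linarith
  have hcpos : ∀ i, 0 < c i := by
    intro i
    have h1 := hkge i
    have h2 := hpos i
    have h3 := neg_abs_le (v i)
    have h4 := abs_nonneg (v i)
    have : k i ≤ k i * a i := by nlinarith
    simp only [hc]; nlinarith
  have hcodd : ∀ i, Odd (c i) := by
    intro i
    simp only [hc]
    rcases Int.even_or_odd (v i) with hv | hv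
    · have hkodd : Odd (k i) := by
        simp only [hk, if_pos hv]
        rcases hv with ⟨m, hm⟩
        exact ⟨|v i| + 1, by ring⟩
      exact hv.add_odd (hkodd.mul (hodd i))
    · have hkeven : Even (k i) := by
        have : ¬ Even (v i) := by simpa [Int.even_iff, Int.odd_iff] using hv
        simp only [hk, if_neg this]
        exact ⟨|v i| + 1, by ring⟩
      exact hv.add_even (hkeven.mul_right (a i))
  have hcdvd : ∀ i, a i ∣ 1 - c i * P i := by
    intro i
    exact ⟨u i - k i * P i, by linear_combination -huv i⟩
  set T : ℤ := ∑ i ∈ Finset.univ.erase i0, c i * P i with hT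
  have hdvd1 : ∀ j ∈ Finset.univ.erase i0, a j ∣ 1 - T := by
    intro j hj
    have hsplit : T = c j * P j + ∑ i ∈ (Finset.univ.erase i0).erase j, c i * P i :=
      (Finset.add_sum_erase _ _ hj).symm
    have hrest : a j ∣ ∑ i ∈ (Finset.univ.erase i0).erase j, c i * P i := by
      refine Finset.dvd_sum fun i hi => ?_
      have hij : j ≠ i := (Finset.mem_erase.1 hi).1.symm
      exact Dvd.dvd.mul_left
        (Finset.dvd_prod_of_mem a (Finset.mem_erase.2 ⟨hij, Finset.mem_univ j⟩)) (c i)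
    have : 1 - T = (1 - c j * P j) - ∑ i ∈ (Finset.univ.erase i0).erase j, c i * P i := by
      rw [hsplit]; ring
    rw [this]
    exact dvd_sub (hcdvd j) hrest
  have hpair : (↑(Finset.univ.erase i0) : Set (Fin n)).Pairwise (Function.onFun IsCoprime a) := by
    intro x hx y hy hxy
    exact hcop x y hxy
  have hdvdP : P i0 ∣ 1 - T := by
    have := Finset.prod_dvd_of_coprime hpair (fun j hj => hdvd1 j hj)
    simpa [hP] using this
  obtain ⟨w, hw⟩ := hdvdP
  refine ⟨fun i => if i = i0 then w else c i, ?_, ?_, ?_, ?_⟩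
  · -- all odd
    intro i
    by_cases h : i = i0
    · simp only [h, if_pos rfl]
      -- Odd w from w * P i0 = 1 - T and Even T
      have hTmod : T % 2 = 0 := by
        have h1 : T % 2 = (∑ i ∈ Finset.univ.erase i0, (c i * P i) % 2) % 2 := by
          rw [hT, Finset.sum_int_mod]
        have h2 : ∀ i ∈ Finset.univ.erase i0, (c i * P i) % 2 = 1 := by
          intro i _
          exact Int.odd_iff.1 ((hcodd i).mul (hPodd i))
        rw [Finset.sum_congr rfl h2] at h1
        have hcard : (Finset.univ.erase i0).card = n - 1 := by
          simp [Finset.card_erase_of_mem]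
        rw [Finset.sum_const, hcard] at h1
        obtain ⟨m, hm⟩ := hodd_n
        rw [h1]
        have : ((n - 1 : ℕ) : ℤ) = 2 * m := by push_cast; omega
        simp [this, Int.mul_emod_right]
      have hPw : Odd (P i0 * w) := by
        rw [← hw]
        rw [Int.odd_iff]
        omega
      exact (Int.odd_mul.1 hPw).2
    · simp only [if_neg h]; exact hcodd i
  · -- sum = 1
    have hsplit := Finset.add_sum_erase Finset.univ
      (fun i => (if i = i0 then w else c i) * P i) (Finset.mem_univ i0)
    have hrest : ∑ i ∈ Finset.univ.erase i0, (if i = i0 then w else c i) * P i = T := by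
      refine Finset.sum_congr rfl fun i hi => ?_
      rw [if_neg (Finset.mem_erase.1 hi).1]
    rw [← hsplit, hrest]
    show (if i0 = i0 then w else c i0) * P i0 + T = 1
    rw [if_pos rfl]
    linarith [hw]
  · intro i hi
    simp only [if_neg hi]
    exact hcpos i
  · show (if i0 = i0 then w else c i0) < 0
    rw [if_pos rfl]
    -- w < 0 since T ≥ 2
    have hT1 : ∀ i ∈ Finset.univ.erase i0, (1 : ℤ) ≤ c i * P i := fun i _ =>
      Int.add_one_le_iff.2 (mul_pos (hcpos i) (hPpos i))
    have hcard : (Finset.univ.erase i0).card = n - 1 := by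
      simp [Finset.card_erase_of_mem]
    have hTge : ((n - 1 : ℕ) : ℤ) ≤ T := by
      have h := Finset.card_nsmul_le_sum (Finset.univ.erase i0)
        (fun i => c i * P i) 1 hT1
      rw [hcard] at h
      rw [hT]
      simpa using h
    have hn' : (2 : ℤ) ≤ ((n - 1 : ℕ) : ℤ) := by push_cast; omega
    have hP0 := hPpos i0
    nlinarith [hw, hTge, hn', hP0]
end

section
/- Let n ≥ 1 and let (a_1, b_1), …, (a_n, b_n) be pairs of coprime integers with all a_i > 0 and with a_{i₀} even for at least one index i₀, and let b be an integer. Then there exist integers k_1, …, k_n such that, setting b_i' = b_i + k_i·a_i and b' = b + Σ_{i=1}^n k_i: (1) b' is even, and (2) for every i at least one of a_i, b_i' is even. -/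
/-- Normalization of Seifert invariants: given coprime pairs `(aᵢ, bᵢ)` with all `aᵢ > 0`
and some `aᵢ` even, and an integer `b`, one can perform moves `bᵢ ↦ bᵢ + kᵢ aᵢ`,
`b ↦ b + Σ kᵢ` so that the new `b` is even and for every `i` at least one of
`aᵢ`, `bᵢ + kᵢ aᵢ` is even. -/
theorem seifert_even_normalization (n : ℕ) (hn : 1 ≤ n) (a b : Fin n → ℤ) (B : ℤ)
    (hpos : ∀ i, 0 < a i) (hcop : ∀ i, IsCoprime (a i) (b i))
    (heven : ∃ i, Even (a i)) :
    ∃ k : Fin n → ℤ, Even (B + ∑ i, k i) ∧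
      ∀ i, Even (a i) ∨ Even (b i + k i * a i) := by
  obtain ⟨i₀, hi₀⟩ := heven
  set k0 : Fin n → ℤ := fun i => if Even (b i) then 0 else 1 with hk0
  set t : ℤ := if Even (B + ∑ i, k0 i) then 0 else 1 with ht
  refine ⟨fun i => k0 i + if i = i₀ then t else 0, ?_, ?_⟩
  · have hsum : ∑ i, (k0 i + if i = i₀ then t else 0) = (∑ i, k0 i) + t := by
      rw [Finset.sum_add_distrib, Finset.sum_ite_eq' Finset.univ i₀,
        if_pos (Finset.mem_univ _)]
    rw [hsum, ht]
    rcases Int.even_or_odd (B + ∑ i, k0 i) with h | h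
    · simpa [h] using h
    · rw [if_neg (Int.not_even_iff_odd.mpr h)]
      rw [Int.odd_iff] at h
      rw [Int.even_iff]
      omega
  · intro i
    by_cases ha : Even (a i)
    · exact Or.inl ha
    · right
      have hne : i ≠ i₀ := fun h => ha (h ▸ hi₀)
      simp only [hne, if_false, add_zero, hk0]
      by_cases hb : Even (b i)
      · simpa [hb] using hb
      · simp only [hb, if_false, one_mul]
        rw [Int.not_even_iff] at hb ha
        rw [Int.even_iff]
        omega
end
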